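/- Existence for two simultaneous impacts: given a momentum p₀ and two unit contact normals u ≠ ±v with angle parameter γ = arcsin(‖u+v‖/2) > 0, there exists a minimal sequence (w_1,…,w_n) with each w_i ∈ {u,v} and n ≤ ⌈π/γ⌉ such that p_f = p₀ Γ(w_1)⋯Γ(w_n) is feasible, i.e. ⟨p_f,u⟩ ≥ 0 and ⟨p_f,v⟩ ≥ 0. -/

import Mathlib

open Matrix

noncomputable def kin {n : ℕ} (M : Matrix (Fin n) (Fin n) ℝ)
    (x y : Matrix (Fin 1) (Fin n) ℝ) : ℝ :=
  (x * M⁻¹ * yᵀ) 0 0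

noncomputable def Gam {n : ℕ} (M : Matrix (Fin n) (Fin n) ℝ)
    (u : Matrix (Fin 1) (Fin n) ℝ) : Matrix (Fin n) (Fin n) ℝ :=
  1 - (2 / kin M u u) • (M⁻¹ * uᵀ * u)

private lemma one_one_mul' (A B : Matrix (Fin 1) (Fin 1) ℝ) :
    (A * B) 0 0 = A 0 0 * B 0 0 := by
  simp [Matrix.mul_apply]

private lemma kin_mul_Gam {n : ℕ} (M : Matrix (Fin n) (Fin n) ℝ)
    (w p q : Matrix (Fin 1) (Fin n) ℝ) (hw : kin M w w = 1) :
    kin M (p * Gam M w) q = kin M p q - 2 * (kin M p w * kin M w q) := by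
  have h1 : p * Gam M w = p - (2:ℝ) • (p * (M⁻¹ * wᵀ * w)) := by
    rw [Gam, hw]
    rw [Matrix.mul_sub, Matrix.mul_one, Matrix.mul_smul]
    norm_num
  rw [kin, h1, Matrix.sub_mul, Matrix.sub_mul, Matrix.smul_mul, Matrix.smul_mul]
  have h2 : p * (M⁻¹ * wᵀ * w) * M⁻¹ * qᵀ = (p * M⁻¹ * wᵀ) * (w * M⁻¹ * qᵀ) := by
    simp only [Matrix.mul_assoc]
  rw [h2]
  simp only [Matrix.sub_apply, Matrix.smul_apply, smul_eq_mul]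
  rw [one_one_mul']
  simp [kin, mul_assoc]

private lemma kin_symm' {n : ℕ} (M : Matrix (Fin n) (Fin n) ℝ) (hM : M.PosDef)
    (p q : Matrix (Fin 1) (Fin n) ℝ) : kin M p q = kin M q p := by
  have hMs : M⁻¹ᵀ = M⁻¹ := by
    rw [Matrix.transpose_nonsing_inv]
    congr 1
    exact hM.1.eq
  have h : (p * M⁻¹ * qᵀ)ᵀ = q * M⁻¹ * pᵀ := by
    rw [Matrix.transpose_mul, Matrix.transpose_mul, Matrix.transpose_transpose, hMs,
      Matrix.mul_assoc]
  calc (p * M⁻¹ * qᵀ) 0 0 = (p * M⁻¹ * qᵀ)ᵀ 0 0 := rfl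
    _ = (q * M⁻¹ * pᵀ) 0 0 := by rw [h]

private lemma kin_self_pos' {n : ℕ} (M : Matrix (Fin n) (Fin n) ℝ) (hM : M.PosDef)
    (w : Matrix (Fin 1) (Fin n) ℝ) (hw : w ≠ 0) : 0 < kin M w w := by
  have hinv := hM.inv
  have hw0 : w 0 ≠ 0 := by
    intro h; apply hw; ext i j
    have : i = 0 := Subsingleton.elim i 0
    subst this; simpa using congrFun h j
  have hpos := hinv.re_dotProduct_pos hw0
  have heq : kin M w w = dotProduct (w 0) (M⁻¹.mulVec (w 0)) := by
    simp [kin, Matrix.mul_apply, Matrix.mulVec, dotProduct, Finset.mul_sum,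
      Finset.sum_mul, Matrix.transpose_apply, mul_assoc]
    rw [Finset.sum_comm]
  rw [heq]
  simpa using hpos

private lemma kin_add_add {n : ℕ} (M : Matrix (Fin n) (Fin n) ℝ)
    (p q : Matrix (Fin 1) (Fin n) ℝ) :
    kin M (p + q) (p + q) = kin M p p + kin M p q + kin M q p + kin M q q := by
  simp [kin, Matrix.add_mul, Matrix.transpose_add, Matrix.mul_add, Matrix.add_apply]
  ring

private lemma kin_sub_sub {n : ℕ} (M : Matrix (Fin n) (Fin n) ℝ)
    (p q : Matrix (Fin 1) (Fin n) ℝ) :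
    kin M (p - q) (p - q) = kin M p p - kin M p q - kin M q p + kin M q q := by
  simp [kin, Matrix.sub_mul, Matrix.transpose_sub, Matrix.mul_sub, Matrix.sub_apply]
  ring

/-- angle sequence -/
noncomputable def psiseq (γ ψ : ℝ) (k : ℕ) : ℝ :=
  if k % 2 = 0 then ψ + 2*k*γ else 2*γ - ψ - 2*k*γ

private lemma trig1 (a b : ℝ) :
    Real.sin (2*a + b) = Real.sin (2*a - b) + 2 * Real.cos (2*a) * Real.sin b := by
  rw [Real.sin_add, Real.sin_sub]; ring

private lemma trig2 (a b : ℝ) :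
    Real.sin (4*a - b) = Real.sin b + 2 * Real.cos (2*a) * Real.sin (2*a - b) := by
  rw [show 4*a - b = 2*a + (2*a - b) by ring, Real.sin_add, Real.sin_sub, Real.cos_sub]
  linear_combination Real.sin b * Real.sin_sq_add_cos_sq (2*a)

private lemma psiseq_succ (γ ψ : ℝ) (k : ℕ) :
    psiseq γ ψ (k+1) = if k % 2 = 0 then -(psiseq γ ψ k) else 4*γ - psiseq γ ψ k := by
  rcases Nat.even_or_odd k with hk | hk
  · have hk2 : k % 2 = 0 := Nat.even_iff.mp hk
    rw [psiseq, psiseq, if_pos hk2, if_pos hk2, if_neg (by omega : ¬ (k+1) % 2 = 0)]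
    push_cast; ring
  · have hk2 : k % 2 = 1 := Nat.odd_iff.mp hk
    rw [psiseq, psiseq, if_neg (by omega : ¬ k % 2 = 0), if_neg (by omega : ¬ k % 2 = 0),
      if_pos (by omega : (k+1) % 2 = 0)]
    push_cast; ring

private lemma alt_formula {n : ℕ} (M : Matrix (Fin n) (Fin n) ℝ)
    (u v p0 : Matrix (Fin 1) (Fin n) ℝ)
    (huu : kin M u u = 1) (hvv : kin M v v = 1)
    (γ r ψ : ℝ)
    (hc : kin M u v = -Real.cos (2*γ)) (hc' : kin M v u = -Real.cos (2*γ))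
    (ha0 : kin M p0 u = r * Real.sin (2*γ - ψ)) (hb0 : kin M p0 v = r * Real.sin ψ) :
    ∀ k : ℕ,
      kin M (p0 * (((List.range k).map
          (fun i => Gam M (if i % 2 = 0 then v else u))).prod)) u
        = r * Real.sin (2*γ - psiseq γ ψ k) ∧
      kin M (p0 * (((List.range k).map
          (fun i => Gam M (if i % 2 = 0 then v else u))).prod)) v
        = r * Real.sin (psiseq γ ψ k) := by
  intro k
  induction k with
  | zero =>
    simp [psiseq, ha0, hb0]
  | succ k ih =>
    obtain ⟨ihu, ihv⟩ := ih
    rw [List.range_succ, List.map_append, List.prod_append]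
    simp only [List.map_cons, List.map_nil, List.prod_cons, List.prod_nil, Matrix.mul_one]
    rw [← Matrix.mul_assoc]
    set pk := p0 * (((List.range k).map
        (fun i => Gam M (if i % 2 = 0 then v else u))).prod) with hpk
    rw [psiseq_succ]
    set X := psiseq γ ψ k with hX
    rcases Nat.even_or_odd k with hk | hk
    · -- k even : reflect in v
      have hk2 : k % 2 = 0 := Nat.even_iff.mp hk
      rw [if_pos hk2, if_pos hk2]
      rw [kin_mul_Gam M v pk u hvv, kin_mul_Gam M v pk v hvv]
      rw [ihu, ihv, hc', hvv]
      constructor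
      · rw [sub_neg_eq_add, trig1 γ X]; ring
      · rw [Real.sin_neg]; ring
    · -- k odd : reflect in u
      have hk1 : k % 2 = 1 := Nat.odd_iff.mp hk
      have hk2 : ¬ k % 2 = 0 := by omega
      rw [if_neg hk2, if_neg hk2]
      rw [kin_mul_Gam M u pk u huu, kin_mul_Gam M u pk v huu]
      rw [ihu, ihv, hc, huu]
      constructor
      · rw [show 2*γ - (4*γ - X) = -(2*γ - X) by ring, Real.sin_neg]; ring
      · rw [trig2 γ X]; ring

theorem existence_two_impacts {n : ℕ}
    (M : Matrix (Fin n) (Fin n) ℝ) (hM : M.PosDef)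
    (u v : Matrix (Fin 1) (Fin n) ℝ)
    (huu : kin M u u = 1) (hvv : kin M v v = 1)
    (huv : u ≠ v) (huv' : u ≠ -v)
    (γ : ℝ) (hγ : γ = Real.arcsin (Real.sqrt (kin M (u + v) (u + v)) / 2))
    (hγpos : 0 < γ)
    (p0 : Matrix (Fin 1) (Fin n) ℝ) :
    ∃ L : List (Matrix (Fin 1) (Fin n) ℝ),
      (∀ w ∈ L, w ∈ ({u, v} : Set (Matrix (Fin 1) (Fin n) ℝ))) ∧
      L.length ≤ ⌈Real.pi / γ⌉₊ ∧
      (0 ≤ kin M (p0 * (L.map (Gam M)).prod) u ∧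
        0 ≤ kin M (p0 * (L.map (Gam M)).prod) v) ∧
      (∀ L' : List (Matrix (Fin 1) (Fin n) ℝ), L'.Sublist L → L' ≠ L →
        ¬ (0 ≤ kin M (p0 * (L'.map (Gam M)).prod) u ∧
            0 ≤ kin M (p0 * (L'.map (Gam M)).prod) v)) := by
  classical
  set N := ⌈Real.pi / γ⌉₊ with hN
  set c := kin M u v with hcdef
  have hvu : kin M v u = c := (kin_symm' M hM v u).trans rfl
  -- bounds on c
  have hupv : u + v ≠ 0 := by
    intro h
    exact huv' (by linear_combination (norm := module) h)
  have humv : u - v ≠ 0 := sub_ne_zero.mpr huv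
  have hsum : kin M (u + v) (u + v) = 2 + 2*c := by
    rw [kin_add_add, huu, hvv, ← hcdef, hvu]; ring
  have hdiff : kin M (u - v) (u - v) = 2 - 2*c := by
    rw [kin_sub_sub, huu, hvv, ← hcdef, hvu]; ring
  have hcl : -1 < c := by
    have := kin_self_pos' M hM (u+v) hupv
    rw [hsum] at this; linarith
  have hcu : c < 1 := by
    have := kin_self_pos' M hM (u-v) humv
    rw [hdiff] at this; linarith
  -- γ facts
  have h2c0 : (0:ℝ) ≤ 2 + 2*c := by linarith
  have hsqle : Real.sqrt (2 + 2*c) < 2 := by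
    have h4 : Real.sqrt 4 = 2 := by
      rw [show (4:ℝ) = 2^2 by norm_num, Real.sqrt_sq (by norm_num : (0:ℝ) ≤ 2)]
    calc Real.sqrt (2 + 2*c) < Real.sqrt 4 := Real.sqrt_lt_sqrt h2c0 (by linarith)
      _ = 2 := h4
  have hsin : Real.sin γ = Real.sqrt (2 + 2*c) / 2 := by
    rw [hγ, hsum]
    exact Real.sin_arcsin (by linarith [Real.sqrt_nonneg (2+2*c)]) (by linarith)
  have hγlt : γ < Real.pi / 2 := by
    rw [hγ, hsum]
    exact Real.arcsin_lt_pi_div_two.mpr (by linarith)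
  have hcos2γ : Real.cos (2*γ) = -c := by
    have h1 : Real.cos (2*γ) = 1 - 2 * Real.sin γ ^ 2 := by
      rw [Real.cos_two_mul']
      have := Real.sin_sq_add_cos_sq γ
      linarith
    rw [h1, hsin]
    rw [div_pow, Real.sq_sqrt h2c0]
    ring
  have hs2γ : 0 < Real.sin (2*γ) := Real.sin_pos_of_pos_of_lt_pi (by linarith) (by linarith)
  have h2γπ : 2*γ < Real.pi := by linarith
  -- initial data, polar coordinates
  set a0 := kin M p0 u with ha0def
  set b0 := kin M p0 v with hb0def
  set e := (a0 - c*b0) / Real.sin (2*γ) with hedef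
  set z : ℂ := ⟨e, b0⟩ with hzdef
  set r := ‖z‖ with hrdef
  set ψ' := Complex.arg z with hψ'def
  set ψ := if ψ' < 0 then ψ' + 2*Real.pi else ψ' with hψdef
  have hr0 : 0 ≤ r := norm_nonneg z
  have hrcos : r * Real.cos ψ = e := by
    rw [hψdef]
    split_ifs with h
    · rw [Real.cos_add_two_pi]; exact Complex.norm_mul_cos_arg z
    · exact Complex.norm_mul_cos_arg z
  have hrsin : r * Real.sin ψ = b0 := by
    rw [hψdef]
    split_ifs with h
    · rw [Real.sin_add_two_pi]; exact Complex.norm_mul_sin_arg z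
    · exact Complex.norm_mul_sin_arg z
  have hψ0 : 0 ≤ ψ := by
    rw [hψdef]
    split_ifs with h
    · have := Complex.neg_pi_lt_arg z
      rw [← hψ'def] at this
      linarith [Real.pi_pos]
    · linarith [not_lt.mp h]
  have hψ2π : ψ < 2*Real.pi := by
    rw [hψdef]
    split_ifs with h
    · linarith
    · have := Complex.arg_le_pi z
      rw [← hψ'def] at this
      linarith [Real.pi_pos]
  have hb0' : b0 = r * Real.sin ψ := hrsin.symm
  have ha0' : a0 = r * Real.sin (2*γ - ψ) := by
    rw [Real.sin_sub, mul_sub, ← mul_assoc, ← mul_assoc, mul_comm r (Real.sin (2*γ)),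
      mul_comm r (Real.cos (2*γ)), mul_assoc, mul_assoc, hrcos, hrsin, hcos2γ, hedef]
    field_simp
    ring
  -- main existence of a feasible short list
  have hNγ : Real.pi ≤ (N:ℝ) * γ := by
    have := Nat.le_ceil (Real.pi / γ)
    rw [← hN] at this
    calc Real.pi = (Real.pi / γ) * γ := by field_simp
      _ ≤ (N:ℝ) * γ := by
          apply mul_le_mul_of_nonneg_right this hγpos.le
  have hex : ∃ L : List (Matrix (Fin 1) (Fin n) ℝ),
      (∀ w ∈ L, w ∈ ({u, v} : Set (Matrix (Fin 1) (Fin n) ℝ))) ∧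
      L.length ≤ N ∧
      (0 ≤ kin M (p0 * (L.map (Gam M)).prod) u ∧
        0 ≤ kin M (p0 * (L.map (Gam M)).prod) v) := by
    rcases le_or_gt ψ (2*γ) with hcase | hcase
    · refine ⟨[], by simp, by simp, ?_, ?_⟩
      · simp only [List.map_nil, List.prod_nil, Matrix.mul_one]
        rw [← ha0def, ha0']
        apply mul_nonneg hr0
        apply Real.sin_nonneg_of_nonneg_of_le_pi (by linarith) (by linarith)
      · simp only [List.map_nil, List.prod_nil, Matrix.mul_one]
        rw [← hb0def, hb0']
        apply mul_nonneg hr0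
        apply Real.sin_nonneg_of_nonneg_of_le_pi (by linarith) (by linarith)
    · -- need reflections
      set k := ⌈(2*Real.pi - ψ) / (2*γ)⌉₊ with hkdef
      have hγ2 : (0:ℝ) < 2*γ := by linarith
      have hk1 : 0 < k := by
        rw [hkdef]
        apply Nat.ceil_pos.mpr
        exact div_pos (by linarith) hγ2
      have hkup : (2*Real.pi - ψ) ≤ 2*(k:ℝ)*γ := by
        have := Nat.le_ceil ((2*Real.pi - ψ) / (2*γ))
        rw [← hkdef] at this
        calc 2*Real.pi - ψ = ((2*Real.pi - ψ)/(2*γ)) * (2*γ) :=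
              (div_mul_cancel₀ _ (ne_of_gt hγ2)).symm
          _ ≤ (k:ℝ) * (2*γ) := mul_le_mul_of_nonneg_right this hγ2.le
          _ = 2*(k:ℝ)*γ := by ring
      have hklow : 2*((k:ℝ)-1)*γ < 2*Real.pi - ψ := by
        have h1 : ((k:ℝ)) < (2*Real.pi - ψ)/(2*γ) + 1 := by
          rw [hkdef]
          exact Nat.ceil_lt_add_one (div_nonneg (by linarith) hγ2.le)
        have h2 : ((k:ℝ)-1) * (2*γ) < ((2*Real.pi - ψ)/(2*γ)) * (2*γ) := by
          apply mul_lt_mul_of_pos_right _ hγ2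
          linarith
        rw [div_mul_cancel₀ _ (ne_of_gt hγ2)] at h2
        linarith
      have hkN : k ≤ N := by
        rw [hkdef]
        apply Nat.ceil_le.mpr
        rw [div_le_iff₀ hγ2]
        have : (N:ℝ) * (2*γ) = 2*((N:ℝ)*γ) := by ring
        rw [this]
        linarith
      set σ := ψ + 2*(k:ℝ)*γ - 2*Real.pi with hσdef
      have hσ0 : 0 ≤ σ := by rw [hσdef]; linarith
      have hσ2γ : σ ≤ 2*γ := by rw [hσdef]; nlinarith [hklow]
      have hsσ : 0 ≤ Real.sin σ :=
        Real.sin_nonneg_of_nonneg_of_le_pi hσ0 (by linarith)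
      have hsσ' : 0 ≤ Real.sin (2*γ - σ) :=
        Real.sin_nonneg_of_nonneg_of_le_pi (by linarith) (by linarith)
      have hprod : (((List.range k).map (fun i => if i % 2 = 0 then v else u)).map (Gam M))
          = (List.range k).map (fun i => Gam M (if i % 2 = 0 then v else u)) := by
        rw [List.map_map]; rfl
      obtain ⟨hku, hkv⟩ := alt_formula M u v p0 huu hvv γ r ψ
        (by rw [← hcdef, hcos2γ]; ring) (by rw [hvu, hcos2γ]; ring)
        (by rw [← ha0def, ha0']) (by rw [← hb0def, hb0']) k
      refine ⟨(List.range k).map (fun i => if i % 2 = 0 then v else u), ?_, ?_, ?_, ?_⟩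
      · intro w hw
        simp only [List.mem_map, List.mem_range] at hw
        obtain ⟨i, _, hi⟩ := hw
        split_ifs at hi
        · rw [← hi]; right; rfl
        · rw [← hi]; left; rfl
      · simp only [List.length_map, List.length_range]
        exact hkN
      · rw [hprod, hku]
        rcases Nat.even_or_odd k with hk | hk
        · have hps : psiseq γ ψ k = σ + 2*Real.pi := by
            rw [psiseq, if_pos (Nat.even_iff.mp hk), hσdef]; ring
          rw [hps, show 2*γ - (σ + 2*Real.pi) = (2*γ - σ) - 2*Real.pi by ring,
            Real.sin_sub_two_pi]
          exact mul_nonneg hr0 hsσ'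
        · have hkodd : k % 2 = 1 := Nat.odd_iff.mp hk
          have hps : psiseq γ ψ k = (2*γ - σ) - 2*Real.pi := by
            rw [psiseq, if_neg (by omega : ¬ k % 2 = 0), hσdef]; ring
          rw [hps, show 2*γ - ((2*γ - σ) - 2*Real.pi) = σ + 2*Real.pi by ring,
            Real.sin_add_two_pi]
          exact mul_nonneg hr0 hsσ
      · rw [hprod, hkv]
        rcases Nat.even_or_odd k with hk | hk
        · have hps : psiseq γ ψ k = σ + 2*Real.pi := by
            rw [psiseq, if_pos (Nat.even_iff.mp hk), hσdef]; ring
          rw [hps, Real.sin_add_two_pi]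
          exact mul_nonneg hr0 hsσ
        · have hkodd : k % 2 = 1 := Nat.odd_iff.mp hk
          have hps : psiseq γ ψ k = (2*γ - σ) - 2*Real.pi := by
            rw [psiseq, if_neg (by omega : ¬ k % 2 = 0), hσdef]; ring
          rw [hps, Real.sin_sub_two_pi]
          exact mul_nonneg hr0 hsσ'
  -- minimal selection
  have hmex : ∃ m : ℕ, ∃ L : List (Matrix (Fin 1) (Fin n) ℝ),
      ((∀ w ∈ L, w ∈ ({u, v} : Set (Matrix (Fin 1) (Fin n) ℝ))) ∧
      (0 ≤ kin M (p0 * (L.map (Gam M)).prod) u ∧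
        0 ≤ kin M (p0 * (L.map (Gam M)).prod) v)) ∧ L.length = m := by
    obtain ⟨L, h1, h2, h3⟩ := hex
    exact ⟨L.length, L, ⟨h1, h3⟩, rfl⟩
  obtain ⟨L, ⟨hmem, hfeas⟩, hlen⟩ := Nat.find_spec hmex
  have hfindle : Nat.find hmex ≤ N := by
    obtain ⟨L0, h1, h2, h3⟩ := hex
    exact (Nat.find_le ⟨L0, ⟨h1, h3⟩, rfl⟩).trans h2
  refine ⟨L, hmem, by rw [hlen]; exact hfindle, hfeas, ?_⟩
  intro L' hsub hne hfeas'
  have hlt : L'.length < Nat.find hmex := by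
    rw [← hlen]
    exact lt_of_le_of_ne (hsub.length_le) (fun h => hne (hsub.eq_of_length h))
  exact Nat.find_min hmex hlt ⟨L', ⟨fun w hw => hmem w (hsub.subset hw), hfeas'⟩, rfl⟩
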